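/- If for a pair of disjoint hypotheses H_0, H_1 ⊆ P(X) there exists a weakly consistent FP-test (a sequence of measurable tests φ_n : X^n → {0,1,2} with open decision regions such that P^n(φ_n = i) → 1 for all P ∈ H_i, i = 0,1), then there also exists a strongly consistent FP-test, i.e. one with P^∞(φ_n ≠ i for all but finitely many n) = 1 for all P ∈ H_i. -/

import Mathlib

open MeasureTheory Filter Topology Set
open scoped ENNReal NNReal

namespace Stmt5Aux

variable {X : Type*} [MeasurableSpace X]

theorem map_pi_of_injective {ι κ : Type*} [Fintype ι] [Fintype κ]
    (P : Measure X) [IsProbabilityMeasure P] (f : κ → ι) (hf : Function.Injective f) :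
    Measure.map (fun x : ι → X => fun k => x (f k)) (Measure.pi fun _ : ι => P)
      = Measure.pi fun _ : κ => P := by
  classical
  refine (Measure.pi_eq fun S hS => ?_).symm
  rw [Measure.map_apply (measurable_pi_lambda _ fun k => measurable_pi_apply (f k))
      (MeasurableSet.univ_pi hS)]
  have hpre : (fun x : ι → X => fun k => x (f k)) ⁻¹' (Set.univ.pi S)
      = Set.univ.pi (fun i : ι => if h : ∃ k, f k = i then S h.choose else Set.univ) := by
    ext x
    simp only [Set.mem_preimage, Set.mem_univ_pi]
    constructor
    · intro hx i
      by_cases h : ∃ k, f k = i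
      · rw [dif_pos h]
        have := hx h.choose
        rwa [h.choose_spec] at this
      · simp [dif_neg h]
    · intro hx k
      have := hx (f k)
      rw [dif_pos ⟨k, rfl⟩] at this
      have hk : (⟨k, rfl⟩ : ∃ k', f k' = f k).choose = k :=
        hf (Exists.choose_spec (⟨k, rfl⟩ : ∃ k', f k' = f k))
      rwa [hk] at this
  rw [hpre, Measure.pi_pi]
  rw [show Finset.univ.prod (fun i : ι => P (if h : ∃ k, f k = i then S h.choose else Set.univ))
      = (Finset.univ.image f).prod
        (fun i => P (if h : ∃ k, f k = i then S h.choose else Set.univ)) from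
    (Finset.prod_subset (Finset.subset_univ _) (fun i _ hi => by
      rw [dif_neg, measure_univ]
      simpa [Finset.mem_image] using hi)).symm]
  rw [Finset.prod_image (fun k _ k' _ h => hf h)]
  refine Finset.prod_congr rfl fun k _ => ?_
  rw [dif_pos ⟨k, rfl⟩]
  congr 1
  exact congrArg S (hf (Exists.choose_spec (⟨k, rfl⟩ : ∃ k', f k' = f k)))


theorem map_blocks (P : Measure X) [IsProbabilityMeasure P] {n s : ℕ}
    (f : Fin s → Fin s → Fin n) (hf : Function.Injective fun p : Fin s × Fin s => f p.1 p.2) :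
    Measure.map (fun (x : Fin n → X) (b : Fin s) (j : Fin s) => x (f b j))
      (Measure.pi fun _ : Fin n => P)
      = Measure.pi fun _ : Fin s => (Measure.pi fun _ : Fin s => P) := by
  classical
  refine (Measure.pi_eq_generateFrom (fun _ => generateFrom_pi) (fun _ => isPiSystem_pi)
    (fun _ => ⟨fun _ => Set.univ,
      fun _ => ⟨fun _ => Set.univ, fun _ _ => MeasurableSet.univ, by simp⟩,
      fun _ => by simp [measure_univ], Set.iUnion_const _⟩) ?_).symm
  rintro S hS
  have hS' : ∀ b, ∃ t : Fin s → Set X,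
      (∀ j, MeasurableSet (t j)) ∧ Set.univ.pi t = S b := by
    intro b
    obtain ⟨t, ht, hteq⟩ := hS b
    exact ⟨t, fun j => ht j (Set.mem_univ j), hteq⟩
  choose t ht hteq using hS'
  have hmeas : Measurable (fun (x : Fin n → X) (b : Fin s) (j : Fin s) => x (f b j)) :=
    measurable_pi_lambda _ fun b => measurable_pi_lambda _ fun j => measurable_pi_apply _
  have hSmeas : ∀ b, MeasurableSet (S b) := fun b =>
    (hteq b) ▸ MeasurableSet.univ_pi (ht b)
  rw [Measure.map_apply hmeas (MeasurableSet.univ_pi hSmeas)]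
  have hpre : (fun (x : Fin n → X) (b : Fin s) (j : Fin s) => x (f b j)) ⁻¹' (Set.univ.pi S)
      = (fun (x : Fin n → X) (p : Fin s × Fin s) => x (f p.1 p.2)) ⁻¹'
          (Set.univ.pi fun p : Fin s × Fin s => t p.1 p.2) := by
    ext x
    simp only [Set.mem_preimage, Set.mem_univ_pi, Prod.forall]
    constructor
    · intro hx b j
      have := hx b
      rw [← hteq b] at this
      exact this j (Set.mem_univ j)
    · intro hx b
      rw [← hteq b]
      intro j _
      exact hx b j
  have hm2 : Measurable fun (x : Fin n → X) (p : Fin s × Fin s) => x (f p.1 p.2) :=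
    measurable_pi_lambda _ fun p => measurable_pi_apply (f p.1 p.2)
  have hma := Measure.map_apply (μ := Measure.pi fun _ : Fin n => P) hm2
    (MeasurableSet.univ_pi fun p : Fin s × Fin s => ht p.1 p.2)
  rw [hpre, ← hma, map_pi_of_injective P _ hf, Measure.pi_pi]
  rw [Fintype.prod_prod_type]
  refine Finset.prod_congr rfl fun b _ => ?_
  rw [← hteq b, Measure.pi_pi]


theorem majority_bound {Ω : Type*} [MeasurableSpace Ω] (μ : Measure Ω) [IsProbabilityMeasure μ]
    (k : ℕ) (F : Set Ω) (hF : MeasurableSet F) (ε : ℝ≥0∞) (hε : μ F ≤ ε) (hε1 : ε ≤ 1) :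
    (Measure.pi fun _ : Fin k => μ)
      (⋃ T ∈ Finset.univ.filter (fun T : Finset (Fin k) => k ≤ 2 * T.card),
        Set.pi ↑T fun _ => F) ≤ 2 ^ k * ε ^ (k / 2) := by
  classical
  refine le_trans (measure_biUnion_finset_le _ _) ?_
  have hterm : ∀ T ∈ Finset.univ.filter (fun T : Finset (Fin k) => k ≤ 2 * T.card),
      (Measure.pi fun _ : Fin k => μ) (Set.pi ↑T fun _ => F) ≤ ε ^ (k / 2) := by
    intro T hT
    rw [Finset.mem_filter] at hT
    have hcard : k / 2 ≤ T.card := by omega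
    have hps : (Set.pi ↑T fun _ => F)
        = Set.univ.pi (fun b => if b ∈ T then F else Set.univ) := by
      ext y
      simp only [Set.mem_pi, Set.mem_univ_pi, Finset.mem_coe]
      constructor
      · intro hy b
        by_cases hb : b ∈ T
        · simpa [hb] using hy b hb
        · simp [hb]
      · intro hy b hb
        have := hy b (Set.mem_univ b)
        rwa [if_pos hb] at this
    rw [hps, Measure.pi_pi]
    have : ∀ b : Fin k, μ (if b ∈ T then F else Set.univ) = if b ∈ T then μ F else 1 := by
      intro b; split <;> simp
    rw [Finset.prod_congr rfl fun b _ => this b, Finset.prod_ite_mem, Finset.univ_inter,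
      Finset.prod_const]
    calc μ F ^ T.card ≤ ε ^ T.card := pow_le_pow_left' hε _
      _ ≤ ε ^ (k / 2) := pow_le_pow_right_of_le_one' hε1 hcard
  refine le_trans (Finset.sum_le_sum hterm) ?_
  rw [Finset.sum_const, nsmul_eq_mul]
  refine mul_le_mul_left ?_ _
  calc ((Finset.univ.filter (fun T : Finset (Fin k) => k ≤ 2 * T.card)).card : ℝ≥0∞)
      ≤ ((Finset.univ : Finset (Finset (Fin k))).card : ℝ≥0∞) := by
        exact Nat.cast_le.mpr (Finset.card_filter_le _ _)
    _ = 2 ^ k := by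
        rw [Finset.card_univ, Fintype.card_finset, Fintype.card_fin]
        simp [Nat.cast_pow]

theorem summable_half_pow_sqrt : Summable fun n : ℕ => ((2 : ℝ))⁻¹ ^ Nat.sqrt n := by
  have h0 : (0:ℝ) ≤ 2⁻¹ := by norm_num
  have h1 : |(2:ℝ)⁻¹| < 1 := by rw [abs_of_nonneg h0]; norm_num
  have htend := tendsto_pow_const_mul_const_pow_of_abs_lt_one 4 h1
  obtain ⟨M, hM⟩ := htend.bddAbove_range
  rw [← summable_nat_add_iff 1]
  have hM' : ∀ j : ℕ, (j:ℝ) ^ 4 * 2⁻¹ ^ j ≤ M := fun j => hM ⟨j, rfl⟩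
  have hMpos : 0 ≤ M := le_trans (by norm_num) (hM' 0)
  refine Summable.of_nonneg_of_le (fun n => by positivity) (f := fun n => 16 * M / ((n+1 : ℕ):ℝ)^2)
    (fun n => ?_) ?_
  · set s := Nat.sqrt (n+1) with hs
    have hs1 : 1 ≤ s := by
      have h1le : Nat.sqrt 1 ≤ s := Nat.sqrt_le_sqrt (by omega)
      simpa using h1le
    have hnat : n + 1 ≤ 4 * (s * s) := by
      have h2 := Nat.lt_succ_sqrt' (n+1)
      nlinarith [h2, hs1]
    have hA : ((n+1 : ℕ):ℝ) ≤ 4 * (s:ℝ)^2 := by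
      have := (Nat.cast_le (α := ℝ)).mpr hnat
      push_cast at this ⊢
      nlinarith [this]
    have hA2 : ((n+1 : ℕ):ℝ)^2 ≤ 16*(s:ℝ)^4 := by
      nlinarith [hA, (Nat.cast_nonneg (n+1) : (0:ℝ) ≤ ((n+1:ℕ):ℝ))]
    rw [le_div_iff₀ (by positivity)]
    nlinarith [hM' s, hA2, pow_nonneg h0 s]
  · have h2 : Summable (fun n : ℕ => 1 / ((n:ℝ))^2) := by
      exact Real.summable_one_div_nat_pow.mpr (by norm_num)
    have h3 := ((summable_nat_add_iff 1).mpr h2).mul_left (16*M)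
    refine h3.congr fun n => ?_
    push_cast
    ring


/-- index of the `j`-th sample in the `b`-th block -/
def blk {n : ℕ} (s : ℕ) (h : s * s ≤ n) (b j : Fin s) : Fin n :=
  Fin.castLE h (finProdFinEquiv (b, j))

lemma blk_inj {n s : ℕ} (h : s * s ≤ n) :
    Function.Injective fun p : Fin s × Fin s => blk s h p.1 p.2 :=
  (Fin.castLE_injective h).comp finProdFinEquiv.injective

/-- the `b`-th block of samples -/
def blockOf (n : ℕ) (x : Fin n → X) (b : Fin (Nat.sqrt n)) : Fin (Nat.sqrt n) → X :=
  fun j => x (blk (Nat.sqrt n) (Nat.sqrt_le n) b j)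

/-- the full block decomposition map -/
def blockMap (n : ℕ) : (Fin n → X) → (Fin (Nat.sqrt n) → Fin (Nat.sqrt n) → X) :=
  fun x b => blockOf n x b

/-- number of blocks voting for `i` -/
def cnt (φ : ∀ n : ℕ, (Fin n → X) → ℕ) (n : ℕ) (i : ℕ) (x : Fin n → X) : ℕ :=
  (Finset.univ.filter fun b : Fin (Nat.sqrt n) => φ (Nat.sqrt n) (blockOf n x b) = i).card

/-- the strongly consistent test: majority vote over `√n` blocks of length `√n` -/
def psi (φ : ∀ n : ℕ, (Fin n → X) → ℕ) (n : ℕ) (x : Fin n → X) : ℕ :=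
  if Nat.sqrt n < 2 * cnt φ n 0 x then 0 else if Nat.sqrt n < 2 * cnt φ n 1 x then 1 else 2

lemma psi_le_two (φ : ∀ n : ℕ, (Fin n → X) → ℕ) (n : ℕ) (x : Fin n → X) :
    psi φ n x ≤ 2 := by
  unfold psi; split_ifs <;> omega

lemma cnt_add_le (φ : ∀ n : ℕ, (Fin n → X) → ℕ) (n : ℕ) (x : Fin n → X) :
    cnt φ n 0 x + cnt φ n 1 x ≤ Nat.sqrt n := by
  classical
  unfold cnt
  rw [← Finset.card_union_of_disjoint]
  · exact le_trans (Finset.card_le_univ _) (by simp)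
  · rw [Finset.disjoint_filter]
    intro b _ h0 h1
    omega

lemma psi_eq_zero_iff (φ : ∀ n : ℕ, (Fin n → X) → ℕ) (n : ℕ) (x : Fin n → X) :
    psi φ n x = 0 ↔ Nat.sqrt n < 2 * cnt φ n 0 x := by
  unfold psi; split_ifs with h1 h2 <;> simp [h1]

lemma psi_eq_one_iff (φ : ∀ n : ℕ, (Fin n → X) → ℕ) (n : ℕ) (x : Fin n → X) :
    psi φ n x = 1 ↔ Nat.sqrt n < 2 * cnt φ n 1 x := by
  have hle := cnt_add_le φ n x
  unfold psi; split_ifs with h1 h2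
  · have : ¬ (Nat.sqrt n < 2 * cnt φ n 1 x) := by omega
    simp [this]
  · simp [h2]
  · simp [h2]

/-- the majority set written as a finite union of finite intersections -/
lemma maj_eq_union (φ : ∀ n : ℕ, (Fin n → X) → ℕ) (n : ℕ) (i : ℕ) :
    {x : Fin n → X | Nat.sqrt n < 2 * cnt φ n i x}
      = ⋃ T ∈ Finset.univ.filter
          (fun T : Finset (Fin (Nat.sqrt n)) => Nat.sqrt n < 2 * T.card),
          ⋂ b ∈ T, {x : Fin n → X | φ (Nat.sqrt n) (blockOf n x b) = i} := by
  classical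
  ext x
  simp only [Set.mem_setOf_eq, Set.mem_iUnion, Set.mem_iInter, Finset.mem_filter,
    Finset.mem_univ, true_and, exists_prop]
  constructor
  · intro hx
    exact ⟨Finset.univ.filter fun b => φ (Nat.sqrt n) (blockOf n x b) = i, hx,
      fun b hb => (Finset.mem_filter.mp hb).2⟩
  · rintro ⟨T, hT, hx⟩
    have : T.card ≤ cnt φ n i x := by
      apply Finset.card_le_card
      intro b hb
      exact Finset.mem_filter.mpr ⟨Finset.mem_univ b, hx b hb⟩
    omega

/-- Failure of the majority test forces at least half of the blocks to vote wrongly. -/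
lemma fail_subset (φ : ∀ n : ℕ, (Fin n → X) → ℕ) (n : ℕ) (i : ℕ) (hi : i = 0 ∨ i = 1) :
    {x : Fin n → X | psi φ n x ≠ i}
      ⊆ blockMap n ⁻¹' (⋃ T ∈ Finset.univ.filter
          (fun T : Finset (Fin (Nat.sqrt n)) => Nat.sqrt n ≤ 2 * T.card),
          Set.pi ↑T fun _ => {y : Fin (Nat.sqrt n) → X | φ (Nat.sqrt n) y ≠ i}) := by
  classical
  intro x hx
  simp only [Set.mem_setOf_eq] at hx
  have hcnt : 2 * cnt φ n i x ≤ Nat.sqrt n := by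
    rcases hi with rfl | rfl
    · have := (psi_eq_zero_iff φ n x).not
      omega
    · have := (psi_eq_one_iff φ n x).not
      omega
  set T := Finset.univ.filter fun b : Fin (Nat.sqrt n) => φ (Nat.sqrt n) (blockOf n x b) ≠ i
    with hTdef
  have hcard : cnt φ n i x + T.card = Nat.sqrt n := by
    unfold cnt
    rw [hTdef]
    rw [Finset.card_filter_add_card_filter_not]
    simp
  simp only [Set.mem_preimage, Set.mem_iUnion, Finset.mem_filter, Finset.mem_univ, true_and,
    exists_prop]
  refine ⟨T, by omega, ?_⟩
  intro b hb
  simp only [Finset.mem_coe, hTdef, Finset.mem_filter] at hb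
  exact hb.2


/-- numeric bound -/
lemma numeric_bound {s : ℕ} (hs : 1 ≤ s) :
    (2 : ℝ≥0∞) ^ s * (((2 : ℝ≥0∞))⁻¹ ^ 4) ^ (s / 2) ≤ 4 * (2 : ℝ≥0∞)⁻¹ ^ s := by
  have h2 : (2 : ℝ≥0∞) * 2⁻¹ = 1 :=
    ENNReal.mul_inv_cancel (by norm_num) (by norm_num)
  obtain ⟨t, rfl⟩ : ∃ t, s = t + 1 := ⟨s - 1, by omega⟩
  rw [← pow_mul]
  have hexp : 2 * t ≤ 4 * ((t + 1) / 2) := by omega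
  have hmono : (2 : ℝ≥0∞)⁻¹ ^ (4 * ((t+1) / 2)) ≤ 2⁻¹ ^ (2 * t) :=
    pow_le_pow_right_of_le_one' (ENNReal.inv_le_one.mpr one_le_two) hexp
  calc (2 : ℝ≥0∞) ^ (t+1) * 2⁻¹ ^ (4 * ((t+1) / 2))
      ≤ 2 ^ (t+1) * 2⁻¹ ^ (2 * t) := mul_le_mul_right hmono _
    _ = (2 * (2 * 2⁻¹) ^ t) * 2⁻¹ ^ t := by
        rw [mul_pow, two_mul t, pow_add, pow_succ]; ring
    _ = 2 * 2⁻¹ ^ t := by rw [h2, one_pow, mul_one]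
    _ = 4 * 2⁻¹ ^ (t + 1) := by
        have h4 : (4:ℝ≥0∞) * 2⁻¹ ^ (t+1) = 2 * (2 * 2⁻¹) * 2⁻¹ ^ t := by
          rw [pow_succ, show (4:ℝ≥0∞) = 2*2 from by norm_num]; ring
        rw [h4, h2, mul_one]

/-- The key lemma: one hypothesis side. -/
theorem side (φ : ∀ n : ℕ, (Fin n → X) → ℕ) (hφm : ∀ n, Measurable (φ n))
    (i : ℕ) (hi : i = 0 ∨ i = 1)
    (P : Measure X) [IsProbabilityMeasure P]
    (htend : Tendsto (fun n => (Measure.pi fun _ : Fin n => P) {x | φ n x = i}) atTop (𝓝 1))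
    (hψm : ∀ n, Measurable (psi φ n))
    (μ : Measure (ℕ → X)) (hμ : IsProbabilityMeasure μ)
    (hmap : ∀ n : ℕ, Measure.map (fun ω (j : Fin n) => ω (j : ℕ)) μ
      = Measure.pi fun _ : Fin n => P) :
    μ {ω : ℕ → X | ∀ᶠ n in atTop, psi φ n (fun j : Fin n => ω (j : ℕ)) = i} = 1 := by
  classical
  set ε : ℝ≥0∞ := (2 : ℝ≥0∞)⁻¹ ^ 4 with hεdef
  have hε1 : ε ≤ 1 := pow_le_one' (ENNReal.inv_le_one.mpr one_le_two) 4
  -- Step A : the error of `φ_m` is eventually at most `ε`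
  have hFmeas : ∀ m : ℕ, MeasurableSet {y : Fin m → X | φ m y ≠ i} := by
    intro m
    have : {y : Fin m → X | φ m y ≠ i} = (φ m ⁻¹' {i})ᶜ := by
      ext y; simp
    rw [this]
    exact ((hφm m) (measurableSet_singleton i)).compl
  have hA : ∀ᶠ m in atTop,
      (Measure.pi fun _ : Fin m => P) {y : Fin m → X | φ m y ≠ i} ≤ ε := by
    have hlt : (1 : ℝ≥0∞) - ε < 1 := by
      apply ENNReal.sub_lt_self (by norm_num) (by norm_num)
      rw [hεdef]
      exact pow_ne_zero _ (ENNReal.inv_ne_zero.mpr (by norm_num))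
    filter_upwards [htend.eventually_const_le hlt] with m hm
    have hc : {y : Fin m → X | φ m y ≠ i} = {y : Fin m → X | φ m y = i}ᶜ := by
      ext y; simp
    rw [hc, prob_compl_eq_one_sub (s := {y | φ m y = i}) ((hφm m) (measurableSet_singleton i))]
    calc (1 : ℝ≥0∞) - (Measure.pi fun _ : Fin m => P) {y | φ m y = i}
        ≤ 1 - (1 - ε) := tsub_le_tsub_left hm 1
      _ = ε := by
          rw [ENNReal.sub_sub_cancel (by norm_num) hε1]
  obtain ⟨N, hN⟩ := eventually_atTop.mp hA
  -- the sets of trajectories where the test errs at time n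
  set W : ℕ → Set (ℕ → X) :=
    fun n => (fun ω (j : Fin n) => ω (j : ℕ)) ⁻¹' {x : Fin n → X | psi φ n x ≠ i} with hW
  have hprojm : ∀ n : ℕ, Measurable fun (ω : ℕ → X) (j : Fin n) => ω (j : ℕ) :=
    fun n => measurable_pi_lambda _ fun j => measurable_pi_apply _
  have hpsine : ∀ n, MeasurableSet {x : Fin n → X | psi φ n x ≠ i} := by
    intro n
    have : {x : Fin n → X | psi φ n x ≠ i} = (psi φ n ⁻¹' {i})ᶜ := by ext y; simp
    rw [this]
    exact ((hψm n) (measurableSet_singleton i)).compl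
  have hWmeas : ∀ n, MeasurableSet (W n) := fun n => (hprojm n) (hpsine n)
  -- Step B : the per-`n` bound
  have hbound : ∀ n : ℕ, max N 1 ≤ Nat.sqrt n → μ (W n) ≤ 4 * (2 : ℝ≥0∞)⁻¹ ^ Nat.sqrt n := by
    intro n hn
    set s := Nat.sqrt n with hs
    have hμW : μ (W n) = (Measure.pi fun _ : Fin n => P) {x : Fin n → X | psi φ n x ≠ i} := by
      rw [hW, ← hmap n, Measure.map_apply (hprojm n) (hpsine n)]
    set U : Set (Fin s → Fin s → X) :=
      ⋃ T ∈ Finset.univ.filter (fun T : Finset (Fin s) => s ≤ 2 * T.card),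
        Set.pi ↑T fun _ => {y : Fin s → X | φ s y ≠ i} with hU
    have hUmeas : MeasurableSet U := by
      refine MeasurableSet.biUnion (Finset.countable_toSet _) fun T _ => ?_
      exact MeasurableSet.pi (Finset.countable_toSet _) fun b _ => hFmeas s
    have hblockm : Measurable (blockMap (X := X) n) :=
      measurable_pi_lambda _ fun b => measurable_pi_lambda _ fun j => measurable_pi_apply _
    have hsub := fail_subset φ n i hi
    have step1 : μ (W n) ≤ (Measure.pi fun _ : Fin n => P) (blockMap n ⁻¹' U) := by
      rw [hμW]
      exact measure_mono hsub
    have step2 : (Measure.pi fun _ : Fin n => P) (blockMap n ⁻¹' U)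
        = (Measure.pi fun _ : Fin s => (Measure.pi fun _ : Fin s => P)) U := by
      have hmb := map_blocks P (blk s (Nat.sqrt_le n)) (blk_inj (n := n) (s := s) _)
      rw [← hmb, Measure.map_apply
        (measurable_pi_lambda _ fun b => measurable_pi_lambda _ fun j => measurable_pi_apply _)
        hUmeas]
      rfl
    have step3 : (Measure.pi fun _ : Fin s => (Measure.pi fun _ : Fin s => P)) U
        ≤ 2 ^ s * ε ^ (s / 2) := by
      refine majority_bound _ s _ (hFmeas s) ε (hN s ?_) hε1
      omega
    calc μ (W n) ≤ 2 ^ s * ε ^ (s / 2) := le_trans step1 (le_trans step2.le step3)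
      _ ≤ 4 * (2 : ℝ≥0∞)⁻¹ ^ s := numeric_bound (by omega)
  -- Step C : Borel–Cantelli
  have hhalf : (∑' n, (2:ℝ≥0∞)⁻¹ ^ Nat.sqrt n) ≠ ∞ := by
    have hcoe : ∀ n : ℕ, (2:ℝ≥0∞)⁻¹ ^ Nat.sqrt n
        = (((2⁻¹ : ℝ≥0) ^ Nat.sqrt n : ℝ≥0) : ℝ≥0∞) := by
      intro n
      rw [ENNReal.coe_pow, ENNReal.coe_inv (by norm_num), ENNReal.coe_ofNat]
    simp_rw [hcoe]
    apply ENNReal.tsum_coe_ne_top_iff_summable.mpr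
    rw [← NNReal.summable_coe]
    refine summable_half_pow_sqrt.congr fun n => ?_
    push_cast
    rfl
  obtain ⟨N1, hN1⟩ : ∃ N1 : ℕ, ∀ n ≥ N1, max N 1 ≤ Nat.sqrt n := by
    refine ⟨(max N 1) * (max N 1), fun n hn => ?_⟩
    have h1 : Nat.sqrt ((max N 1) * (max N 1)) = max N 1 := by
      rw [← Nat.pow_two, Nat.sqrt_eq']
    calc max N 1 = Nat.sqrt ((max N 1) * (max N 1)) := h1.symm
      _ ≤ Nat.sqrt n := Nat.sqrt_le_sqrt hn
  have hsum : (∑' n, μ (W n)) ≠ ∞ := by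
    have hle : ∀ n, μ (W n) ≤ (if n < N1 then 1 else 0) + 4 * (2:ℝ≥0∞)⁻¹ ^ Nat.sqrt n := by
      intro n
      by_cases h : n < N1
      · simp only [if_pos h]
        exact le_trans prob_le_one le_self_add
      · simp only [if_neg h, zero_add]
        exact hbound n (hN1 n (by omega))
    refine ne_top_of_le_ne_top ?_ (ENNReal.tsum_le_tsum hle)
    rw [ENNReal.tsum_add]
    apply ENNReal.add_ne_top.mpr
    constructor
    · have h1 : (∑' n, if n < N1 then (1:ℝ≥0∞) else 0)
          = ∑ n ∈ Finset.range N1, (if n < N1 then (1:ℝ≥0∞) else 0) :=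
        tsum_eq_sum (fun n hn => if_neg (by simpa using hn))
      rw [h1]
      exact (ENNReal.sum_lt_top.mpr fun n _ => by split <;> norm_num).ne
    · rw [ENNReal.tsum_mul_left]
      exact ENNReal.mul_ne_top (by norm_num) hhalf
  have hlimsup : μ (limsup W atTop) = 0 := measure_limsup_atTop_eq_zero hsum
  have hset : {ω : ℕ → X | ∀ᶠ n in atTop, psi φ n (fun j : Fin n => ω (j : ℕ)) = i}
      = (limsup W atTop)ᶜ := by
    ext ω
    simp only [Set.mem_setOf_eq, Set.mem_compl_iff, mem_limsup_iff_frequently_mem,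
      not_frequently, hW, Set.mem_preimage, Set.mem_setOf_eq, not_not]
  rw [hset, prob_compl_eq_one_sub (MeasurableSet.measurableSet_limsup hWmeas), hlimsup, tsub_zero]


end Stmt5Aux

open MeasureTheory Filter Topology

/-- If a pair of disjoint hypotheses admits a weakly consistent FP-test, then it admits
a strongly consistent FP-test. -/
theorem stmt_5 {X : Type*} [MetricSpace X] [TopologicalSpace.SeparableSpace X]
    [MeasurableSpace X] [BorelSpace X]
    (H0 H1 : Set (Measure X))
    (hprob : ∀ P ∈ H0 ∪ H1, IsProbabilityMeasure P)
    (hdisj : Disjoint H0 H1)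
    (hweak : ∃ φ : ∀ n : ℕ, (Fin n → X) → ℕ,
      (∀ n, Measurable (φ n)) ∧ (∀ n x, φ n x ≤ 2) ∧
      (∀ n, IsOpen {x : Fin n → X | φ n x = 0}) ∧
      (∀ n, IsOpen {x : Fin n → X | φ n x = 1}) ∧
      (∀ P ∈ H0, Tendsto (fun n => (Measure.pi fun _ : Fin n => P) {x | φ n x = 0})
        atTop (𝓝 1)) ∧
      (∀ P ∈ H1, Tendsto (fun n => (Measure.pi fun _ : Fin n => P) {x | φ n x = 1})
        atTop (𝓝 1))) :
    ∃ ψ : ∀ n : ℕ, (Fin n → X) → ℕ,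
      (∀ n, Measurable (ψ n)) ∧ (∀ n x, ψ n x ≤ 2) ∧
      (∀ n, IsOpen {x : Fin n → X | ψ n x = 0}) ∧
      (∀ n, IsOpen {x : Fin n → X | ψ n x = 1}) ∧
      (∀ P ∈ H0, ∀ μ : Measure (ℕ → X), IsProbabilityMeasure μ →
        (∀ n : ℕ, Measure.map (fun ω (j : Fin n) => ω (j : ℕ)) μ =
          Measure.pi fun _ : Fin n => P) →
        μ {ω | ∀ᶠ n in atTop, ψ n (fun j : Fin n => ω (j : ℕ)) = 0} = 1) ∧
      (∀ P ∈ H1, ∀ μ : Measure (ℕ → X), IsProbabilityMeasure μ →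
        (∀ n : ℕ, Measure.map (fun ω (j : Fin n) => ω (j : ℕ)) μ =
          Measure.pi fun _ : Fin n => P) →
        μ {ω | ∀ᶠ n in atTop, ψ n (fun j : Fin n => ω (j : ℕ)) = 1} = 1) := by
  classical
  obtain ⟨φ, hφm, hφle, hφ0, hφ1, hw0, hw1⟩ := hweak
  haveI : SecondCountableTopology X :=
    UniformSpace.secondCountable_of_separable X
  have hopen : ∀ n i : ℕ, IsOpen {y : Fin (Nat.sqrt n) → X | φ (Nat.sqrt n) y = i} →
      IsOpen {x : Fin n → X | Nat.sqrt n < 2 * Stmt5Aux.cnt φ n i x} := by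
    intro n i hi
    rw [Stmt5Aux.maj_eq_union]
    refine isOpen_biUnion fun T _ => ?_
    refine Set.Finite.isOpen_biInter T.finite_toSet fun b _ => ?_
    have hcont : Continuous fun x : Fin n → X => Stmt5Aux.blockOf n x b :=
      continuous_pi fun j => continuous_apply _
    exact hi.preimage hcont
  have hm0 : ∀ n : ℕ, IsOpen {x : Fin n → X | Nat.sqrt n < 2 * Stmt5Aux.cnt φ n 0 x} :=
    fun n => hopen n 0 (hφ0 _)
  have hm1 : ∀ n : ℕ, IsOpen {x : Fin n → X | Nat.sqrt n < 2 * Stmt5Aux.cnt φ n 1 x} :=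
    fun n => hopen n 1 (hφ1 _)
  have hψm : ∀ n, Measurable (Stmt5Aux.psi φ n) := by
    intro n
    unfold Stmt5Aux.psi
    exact Measurable.ite (hm0 n).measurableSet measurable_const
      (Measurable.ite (hm1 n).measurableSet measurable_const measurable_const)
  refine ⟨Stmt5Aux.psi φ, hψm, fun n x => Stmt5Aux.psi_le_two φ n x, ?_, ?_, ?_, ?_⟩
  · intro n
    simp only [Stmt5Aux.psi_eq_zero_iff]
    exact hm0 n
  · intro n
    simp only [Stmt5Aux.psi_eq_one_iff]
    exact hm1 n
  · intro P hP μ hμ hmap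
    haveI : IsProbabilityMeasure P := hprob P (Set.mem_union_left _ hP)
    exact Stmt5Aux.side φ hφm 0 (Or.inl rfl) P (hw0 P hP) hψm μ hμ hmap
  · intro P hP μ hμ hmap
    haveI : IsProbabilityMeasure P := hprob P (Set.mem_union_right _ hP)
    exact Stmt5Aux.side φ hφm 1 (Or.inr rfl) P (hw1 P hP) hψm μ hμ hmap
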